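/- arXiv:1711.05710 — 3 statements merged into one kernel-verified Lean document; each statement's English description precedes it below -/
import Mathlib

section
/- Let C be a binary self-dual [76,38,14] code with an automorphism σ of type 9-(8,0,4), with cycles Ω₁,…,Ω₈ of length 9 and fixed points Ω₉,…,Ω₁₂, and let π : F_σ(C) → 𝔽₂¹² be the map that reads one coordinate from each Ω_i (well defined since elements of F_σ(C) are constant on each cycle). Then C_π = π(F_σ(C)) is a binary self-dual code of length 12 (in particular, of dimension 6). -/
/-- The (Hamming) weight of a binary vector: the number of nonzero coordinates. -/
def wt {n : ℕ} (v : Fin n → ZMod 2) : ℕ := (Finset.univ.filter fun i => v i ≠ 0).card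

/-- A binary code `C` is self-dual if `C = C^⊥` w.r.t. the standard inner product. -/
def IsSelfDual {n : ℕ} (C : Submodule (ZMod 2) (Fin n → ZMod 2)) : Prop :=
  ∀ v : Fin n → ZMod 2, v ∈ C ↔ ∀ u ∈ C, ∑ i, u i * v i = 0

/-- `C` has minimum distance (= minimum weight) exactly `d`. -/
def HasMinDist {n : ℕ} (C : Submodule (ZMod 2) (Fin n → ZMod 2)) (d : ℕ) : Prop :=
  (∃ v ∈ C, v ≠ 0 ∧ wt v = d) ∧ ∀ v ∈ C, v ≠ 0 → d ≤ wt v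

/-- A coordinate permutation `σ` is an automorphism of the code `C`. -/
def IsAut {n : ℕ} (σ : Equiv.Perm (Fin n)) (C : Submodule (ZMod 2) (Fin n → ZMod 2)) : Prop :=
  ∀ v : Fin n → ZMod 2, v ∈ C ↔ (fun i => v (σ i)) ∈ C

/-- Two binary codes are permutation equivalent. -/
def PermEquiv {n : ℕ} (C C' : Submodule (ZMod 2) (Fin n → ZMod 2)) : Prop :=
  ∃ τ : Equiv.Perm (Fin n), ∀ v : Fin n → ZMod 2, v ∈ C ↔ (fun i => v (τ i)) ∈ C'

/-- The fixed subcode `F_σ(C) = {v ∈ C : vσ = v}` (as a set of codewords). -/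
def Fsig {n : ℕ} (σ : Equiv.Perm (Fin n)) (C : Submodule (ZMod 2) (Fin n → ZMod 2)) :
    Set (Fin n → ZMod 2) :=
  {v | v ∈ C ∧ (fun i => v (σ i)) = v}

/-- Self-duality for a length-12 binary code given as a set. -/
def IsSelfDualSet (S : Set (Fin 12 → ZMod 2)) : Prop :=
  ∀ v : Fin 12 → ZMod 2, v ∈ S ↔ ∀ u ∈ S, ∑ i, u i * v i = 0


section Helpers

lemma fixed_pow_apply {n : ℕ} {σ : Equiv.Perm (Fin n)} {a : Fin n → ZMod 2}
    (ha : (fun i => a (σ i)) = a) : ∀ (k : ℕ) (x : Fin n), a ((σ ^ k) x) = a x := by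
  intro k
  induction k with
  | zero => simp
  | succ m ih =>
      intro x
      rw [pow_succ', Equiv.Perm.mul_apply, congrFun ha ((σ ^ m) x), ih]

lemma fixed_constant {n : ℕ} {σ : Equiv.Perm (Fin n)} {a : Fin n → ZMod 2}
    (ha : (fun i => a (σ i)) = a) {x y : Fin n} (h : σ.SameCycle x y) : a x = a y := by
  obtain ⟨i, hi, rfl⟩ := h.exists_pow_eq'
  rw [fixed_pow_apply ha]

lemma order_nine (σ : Equiv.Perm (Fin 76)) (htype : σ.cycleType = Multiset.replicate 8 9) :
    orderOf σ = 9 := by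
  have h := σ.lcm_cycleType
  rw [htype] at h
  rw [← h]
  decide

lemma orbit_card_odd (σ : Equiv.Perm (Fin 76)) (htype : σ.cycleType = Multiset.replicate 8 9)
    (x : Fin 76) : Odd (Finset.univ.filter fun y => σ.SameCycle x y).card := by
  by_cases hx : x ∈ σ.support
  · have hset : (Finset.univ.filter fun y => σ.SameCycle x y) = (σ.cycleOf x).support := by
      ext y
      simp only [Finset.mem_filter, Finset.mem_univ, true_and,
        Equiv.Perm.mem_support_cycleOf_iff]
      exact ⟨fun h => ⟨h, hx⟩, fun h => h.1⟩
    have hcyc : (σ.cycleOf x).IsCycle :=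
      Equiv.Perm.isCycle_cycleOf σ (Equiv.Perm.mem_support.1 hx)
    have hdvd : (σ.cycleOf x).support.card ∣ 9 := by
      rw [← hcyc.orderOf, ← order_nine σ htype]
      exact Equiv.Perm.orderOf_cycleOf_dvd_orderOf σ x
    rw [hset, Nat.odd_iff]
    rcases Nat.even_or_odd (σ.cycleOf x).support.card with he | ho
    · exfalso
      obtain ⟨k, hk⟩ := he
      have : (2 : ℕ) ∣ 9 := dvd_trans ⟨k, by omega⟩ hdvd
      omega
    · exact Nat.odd_iff.1 ho
  · have hfix : σ x = x := Equiv.Perm.notMem_support.1 hx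
    have hset : (Finset.univ.filter fun y => σ.SameCycle x y) = {x} := by
      ext y
      simp only [Finset.mem_filter, Finset.mem_univ, true_and, Finset.mem_singleton]
      constructor
      · intro h; exact (h.eq_of_left hfix).symm
      · rintro rfl; exact Equiv.Perm.SameCycle.refl _ _
    rw [hset]
    simp

end Helpers

theorem projection_selfdual_length_12'
    (C : Submodule (ZMod 2) (Fin 76 → ZMod 2))
    (hsd : ∀ v : Fin 76 → ZMod 2, v ∈ C ↔ ∀ u ∈ C, ∑ i, u i * v i = 0)
    (σ : Equiv.Perm (Fin 76)) (hσ : ∀ v : Fin 76 → ZMod 2, v ∈ C ↔ (fun i => v (σ i)) ∈ C)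
    (htype : σ.cycleType = Multiset.replicate 8 9)
    (r : Fin 12 → Fin 76)
    (hr1 : ∀ x : Fin 76, ∃ i, σ.SameCycle (r i) x)
    (hr2 : ∀ i j, σ.SameCycle (r i) (r j) → i = j)
    (Fsig : Set (Fin 76 → ZMod 2))
    (hF : Fsig = {v | v ∈ C ∧ (fun i => v (σ i)) = v}) :
    ∃ W : Submodule (ZMod 2) (Fin 12 → ZMod 2),
      (W : Set (Fin 12 → ZMod 2)) = (fun v => fun i : Fin 12 => v (r i)) '' Fsig ∧
      (∀ v : Fin 12 → ZMod 2,
        v ∈ (fun v => fun i : Fin 12 => v (r i)) '' Fsig ↔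
          ∀ u ∈ (fun v => fun i : Fin 12 => v (r i)) '' Fsig, ∑ i, u i * v i = 0) ∧
      Module.finrank (ZMod 2) W = 6 := by
  classical
  subst hF
  have h9 : σ ^ 9 = 1 := by rw [← order_nine σ htype]; exact pow_orderOf_eq_one σ
  -- orbit index function
  choose c hc using hr1
  have hcr : ∀ i, c (r i) = i := fun i => hr2 _ _ (hc (r i))
  have hcσ : ∀ x, c (σ x) = c x :=
    fun x => hr2 _ _ ((hc (σ x)).trans ((hc x).apply_right).symm)
  -- fibers of c have odd cardinality
  have hodd : ∀ i : Fin 12,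
      (((Finset.univ.filter fun y => c y = i).card : ℕ) : ZMod 2) = 1 := by
    intro i
    have hseteq : (Finset.univ.filter fun y => c y = i)
        = (Finset.univ.filter fun y => σ.SameCycle (r i) y) := by
      ext y
      simp only [Finset.mem_filter, Finset.mem_univ, true_and]
      constructor
      · rintro rfl; exact hc y
      · intro h; exact (hr2 _ _ (h.trans (hc y).symm)).symm
    rw [hseteq]
    obtain ⟨m, hm⟩ := orbit_card_odd σ htype (r i)
    rw [hm]
    push_cast
    rw [show (2 : ZMod 2) = 0 by decide, zero_mul, zero_add]
  -- key lemma: inner products of fixed vectors localize to orbit representatives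
  have KL : ∀ a b : Fin 76 → ZMod 2, (fun i => a (σ i)) = a → (fun i => b (σ i)) = b →
      ∑ x, a x * b x = ∑ i, a (r i) * b (r i) := by
    intro a b ha hb
    rw [← Finset.sum_fiberwise Finset.univ c (fun x => a x * b x)]
    refine Finset.sum_congr rfl fun i _ => ?_
    have hconst : ∀ x ∈ Finset.univ.filter fun y => c y = i,
        a x * b x = a (r i) * b (r i) := by
      intro x hx
      obtain ⟨-, hxi⟩ := Finset.mem_filter.1 hx
      have hsc : σ.SameCycle (r i) x := hxi ▸ hc x
      rw [← fixed_constant ha hsc, ← fixed_constant hb hsc]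
    rw [Finset.sum_congr rfl hconst, Finset.sum_const, nsmul_eq_mul, hodd i, one_mul]
  -- the trace map
  set T : (Fin 76 → ZMod 2) → (Fin 76 → ZMod 2) :=
    fun u x => ∑ k ∈ Finset.range 9, u ((σ ^ k) x) with hT
  have hTC : ∀ u ∈ C, T u ∈ C := by
    intro u hu
    have hpow : ∀ k : ℕ, (fun x => u ((σ ^ k) x)) ∈ C := by
      intro k
      induction k with
      | zero => simpa using hu
      | succ m ih =>
          have h2 := (hσ (fun x => u ((σ ^ m) x))).1 ih
          have : (fun x => u ((σ ^ (m + 1)) x)) = fun x => u ((σ ^ m) (σ x)) := by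
            funext x
            rw [pow_succ, Equiv.Perm.mul_apply]
          rw [this]
          exact h2
    have : T u = ∑ k ∈ Finset.range 9, (fun x => u ((σ ^ k) x)) := by
      funext x
      rw [Finset.sum_apply]
    rw [this]
    exact Submodule.sum_mem C fun k _ => hpow k
  have hTfix : ∀ u : Fin 76 → ZMod 2, (fun x => T u (σ x)) = T u := by
    intro u
    funext x
    show ∑ k ∈ Finset.range 9, u ((σ ^ k) (σ x)) = ∑ k ∈ Finset.range 9, u ((σ ^ k) x)
    have hstep : ∀ k, u ((σ ^ k) (σ x)) = u ((σ ^ (k + 1)) x) := by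
      intro k
      rw [pow_succ, Equiv.Perm.mul_apply]
    simp_rw [hstep]
    have h1 := Finset.sum_range_succ' (fun k => u ((σ ^ k) x)) 9
    have h2 := Finset.sum_range_succ (fun k => u ((σ ^ k) x)) 9
    have h90 : u ((σ ^ 9) x) = u ((σ ^ 0) x) := by rw [h9]; simp
    have := h1.symm.trans h2
    rw [h90] at this
    simpa using (add_right_cancel this)
  -- ⟨u, v⟩ = ⟨T u, v⟩ for fixed v
  have hTip : ∀ (u v : Fin 76 → ZMod 2), (fun i => v (σ i)) = v →
      ∑ x, T u x * v x = ∑ x, u x * v x := by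
    intro u v hv
    have : ∀ x, T u x * v x = ∑ k ∈ Finset.range 9, u ((σ ^ k) x) * v x := by
      intro x
      rw [hT]
      exact Finset.sum_mul _ _ _
    simp_rw [this]
    rw [Finset.sum_comm]
    have hinner : ∀ k ∈ Finset.range 9,
        ∑ x, u ((σ ^ k) x) * v x = ∑ x, u x * v x := by
      intro k _
      have : ∀ x, u ((σ ^ k) x) * v x = u ((σ ^ k) x) * v ((σ ^ k) x) := by
        intro x
        rw [fixed_pow_apply hv]
      simp_rw [this]
      exact Equiv.sum_comp (σ ^ k : Equiv.Perm (Fin 76)) (fun y => u y * v y)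
    rw [Finset.sum_congr rfl hinner, Finset.sum_const]
    simp only [Finset.card_range, nsmul_eq_mul]
    rw [show ((9 : ℕ) : ZMod 2) = 1 by decide, one_mul]
  -- the submodules
  set K : Submodule (ZMod 2) (Fin 76 → ZMod 2) :=
    LinearMap.ker (LinearMap.funLeft (ZMod 2) (ZMod 2) σ - LinearMap.id) with hKdef
  have hK : ∀ v : Fin 76 → ZMod 2, v ∈ K ↔ (fun i => v (σ i)) = v := by
    intro v
    rw [hKdef, LinearMap.mem_ker, LinearMap.sub_apply, LinearMap.id_apply, sub_eq_zero]
    rfl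
  set π : (Fin 76 → ZMod 2) →ₗ[ZMod 2] (Fin 12 → ZMod 2) :=
    LinearMap.funLeft (ZMod 2) (ZMod 2) r with hπdef
  set W : Submodule (ZMod 2) (Fin 12 → ZMod 2) := Submodule.map π (C ⊓ K) with hWdef
  have hFsetK : ((C ⊓ K : Submodule (ZMod 2) (Fin 76 → ZMod 2)) : Set (Fin 76 → ZMod 2))
      = {v | v ∈ C ∧ (fun i => v (σ i)) = v} := by
    ext v
    simp only [SetLike.mem_coe, Submodule.mem_inf, Set.mem_setOf_eq, hK]
  have hWS : (W : Set (Fin 12 → ZMod 2))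
      = (fun v => fun i : Fin 12 => v (r i)) '' {v | v ∈ C ∧ (fun i => v (σ i)) = v} := by
    rw [hWdef, Submodule.map_coe, hFsetK]
    rfl
  -- self-duality of the projected set
  have hSD : ∀ v : Fin 12 → ZMod 2,
      v ∈ (fun v => fun i : Fin 12 => v (r i)) '' {v | v ∈ C ∧ (fun i => v (σ i)) = v} ↔
        ∀ u ∈ (fun v => fun i : Fin 12 => v (r i)) '' {v | v ∈ C ∧ (fun i => v (σ i)) = v},
          ∑ i, u i * v i = 0 := by
    intro w
    constructor
    · rintro ⟨a, ⟨haC, hafix⟩, rfl⟩ u ⟨b, ⟨hbC, hbfix⟩, rfl⟩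
      show ∑ i, b (r i) * a (r i) = 0
      rw [← KL b a hbfix hafix]
      exact (hsd a).1 haC b hbC
    · intro hw
      set v : Fin 76 → ZMod 2 := fun x => w (c x) with hvdef
      have hvfix : (fun i => v (σ i)) = v := by
        funext x
        show w (c (σ x)) = w (c x)
        rw [hcσ]
      have hvC : v ∈ C := by
        rw [hsd]
        intro u huC
        have e1 : ∑ x, u x * v x = ∑ x, T u x * v x := (hTip u v hvfix).symm
        have e2 : ∑ x, T u x * v x = ∑ i, T u (r i) * v (r i) :=
          KL (T u) v (hTfix u) hvfix
        have hmem : (fun i : Fin 12 => T u (r i)) ∈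
            (fun v => fun i : Fin 12 => v (r i)) '' {v | v ∈ C ∧ (fun i => v (σ i)) = v} :=
          ⟨T u, ⟨hTC u huC, hTfix u⟩, rfl⟩
        have e3 := hw _ hmem
        rw [e1, e2]
        calc ∑ i, T u (r i) * v (r i) = ∑ i, T u (r i) * w i := by
              refine Finset.sum_congr rfl fun i _ => ?_
              rw [hvdef]
              show T u (r i) * w (c (r i)) = T u (r i) * w i
              rw [hcr]
          _ = 0 := e3
      refine ⟨v, ⟨hvC, hvfix⟩, ?_⟩
      funext i
      show w (c (r i)) = w i
      rw [hcr]
  -- the bilinear form and dimension count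
  refine ⟨W, hWS, hSD, ?_⟩
  set B : LinearMap.BilinForm (ZMod 2) (Fin 12 → ZMod 2) :=
    LinearMap.mk₂ (ZMod 2) (fun u v => ∑ i, u i * v i)
      (fun m m' n => by simp [add_mul, Finset.sum_add_distrib])
      (fun c m n => by simp [Finset.mul_sum, mul_assoc, smul_eq_mul])
      (fun m n n' => by simp [mul_add, Finset.sum_add_distrib])
      (fun c m n => by
        simp only [smul_eq_mul, Finset.mul_sum, Pi.smul_apply]
        exact Finset.sum_congr rfl fun i _ => by ring) with hBdef
  have hBapp : ∀ u v : Fin 12 → ZMod 2, B u v = ∑ i, u i * v i := fun u v => rfl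
  have hrefl : B.IsRefl := by
    intro u v h
    rw [hBapp] at h ⊢
    rw [← h]
    exact Finset.sum_congr rfl fun i _ => mul_comm _ _
  have hnd : B.Nondegenerate := by
    refine (LinearMap.IsRefl.nondegenerate_iff_separatingLeft hrefl).2 ?_
    intro u hu
    funext j
    have := hu (Pi.single j 1)
    rw [hBapp] at this
    simpa [Pi.single_apply, Finset.sum_ite_eq'] using this
  have hWorth : W = B.orthogonal W := by
    ext v
    have h1 : v ∈ W ↔ v ∈ (W : Set (Fin 12 → ZMod 2)) := Iff.rfl
    rw [h1, hWS, hSD v, LinearMap.BilinForm.mem_orthogonal_iff]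
    constructor
    · intro h u huW
      have : u ∈ (W : Set (Fin 12 → ZMod 2)) := huW
      rw [hWS] at this
      exact h u this
    · intro h u huS
      have : u ∈ (W : Set (Fin 12 → ZMod 2)) := by rw [hWS]; exact huS
      exact h u this
  have hcount := LinearMap.BilinForm.finrank_add_finrank_orthogonal (B := B) hrefl W
  rw [LinearMap.BilinForm.orthogonal_top_eq_bot hnd, inf_bot_eq, finrank_bot, add_zero, ← hWorth,
    Module.finrank_fin_fun] at hcount
  omega

/-- Let `C` be a binary self-dual `[76,38,14]` code with an automorphism `σ` of type
`9-(8,0,4)` and let `r` pick one coordinate from each of the 12 orbits (cycles and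
fixed points) of `σ`.  Then `C_π = π(F_σ(C))`, where `π` reads the coordinates `r i`,
is a binary self-dual code of length 12 (in particular of dimension 6). -/
theorem projection_selfdual_length_12
    (C : Submodule (ZMod 2) (Fin 76 → ZMod 2))
    (hsd : IsSelfDual C) (hdim : Module.finrank (ZMod 2) C = 38)
    (hd : HasMinDist C 14)
    (σ : Equiv.Perm (Fin 76)) (hσ : IsAut σ C)
    (htype : σ.cycleType = Multiset.replicate 8 9)
    (r : Fin 12 → Fin 76)
    (hr1 : ∀ x : Fin 76, ∃ i, σ.SameCycle (r i) x)
    (hr2 : ∀ i j, σ.SameCycle (r i) (r j) → i = j) :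
    ∃ W : Submodule (ZMod 2) (Fin 12 → ZMod 2),
      (W : Set (Fin 12 → ZMod 2)) = (fun v => fun i : Fin 12 => v (r i)) '' Fsig σ C ∧
      IsSelfDualSet ((fun v => fun i : Fin 12 => v (r i)) '' Fsig σ C) ∧
      Module.finrank (ZMod 2) W = 6 := by
  obtain ⟨W, h1, h2, h3⟩ :=
    projection_selfdual_length_12' C hsd σ hσ htype r hr1 hr2 (Fsig σ C) rfl
  exact ⟨W, h1, h2, h3⟩
end

section
/- Let C be a binary self-dual [76,38,14] code with an automorphism σ of type 9-(8,0,4), let F_σ(C) = {v ∈ C : vσ = v} and E_σ(C) = {v ∈ C : wt(v|Ω_i) ≡ 0 (mod 2) for every cycle and fixed point Ω_i of σ}. For 1 ≤ s ≤ 76 let A_s, B_s, E_s denote the numbers of codewords of weight s in C, F_σ(C), E_σ(C), respectively. Then E_s ≡ 0 (mod 3) and A_s ≡ B_s (mod 3) for all 1 ≤ s ≤ 76. -/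
/-- The subcode `E_σ(C)`: codewords whose restriction to every cycle (orbit) of `σ`,
including the fixed points, has even weight. -/
def Esig {n : ℕ} (σ : Equiv.Perm (Fin n)) (C : Submodule (ZMod 2) (Fin n → ZMod 2)) :
    Set (Fin n → ZMod 2) :=
  {v | v ∈ C ∧ ∀ i : Fin n, Even (Set.ncard {j : Fin n | σ.SameCycle i j ∧ v j ≠ 0})}


section AuxLemmas

open MulAction in
/-- Orbit counting: a permutation of order dividing 9 acting on an invariant finite set
gives a count congruent mod 3 to the number of its fixed points. -/
lemma key_count {α : Type*} [Finite α] (f : Equiv.Perm α) (hf : f ^ 9 = 1)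
    (S : Set α) (hS : ∀ v, v ∈ S ↔ f v ∈ S) :
    S.ncard ≡ {v | v ∈ S ∧ f v = v}.ncard [MOD 3] := by
  have h3 : Fact (Nat.Prime 3) := ⟨by norm_num⟩
  set e : Equiv.Perm S := f.subtypePerm (fun x => (hS x).symm) with he
  have he9 : e ^ 9 = 1 := by
    ext x
    simp [he, Equiv.Perm.subtypePerm_pow, hf]
  have hzpow : ∀ (x : S), e x = x → ∀ m : ℤ, (e ^ m) x = x := by
    intro x hx m
    have hinv : e⁻¹ x = x := by conv_lhs => rw [← hx]; simp
    induction m using Int.induction_on with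
    | zero => rfl
    | succ k ih => rw [add_comm, zpow_add, zpow_one, Equiv.Perm.mul_apply, ih, hx]
    | pred k ih => rw [zpow_sub_one, Equiv.Perm.mul_apply, hinv, ih]
  have hpg : IsPGroup 3 (Subgroup.zpowers e) := by
    intro g
    obtain ⟨n, hn⟩ := g.2
    refine ⟨2, ?_⟩
    have h1 : (g : Equiv.Perm S) ^ (9 : ℕ) = 1 := by
      rw [← hn, ← zpow_natCast, ← zpow_mul, mul_comm, zpow_mul, zpow_natCast, he9, one_zpow]
    ext1
    show (g : Equiv.Perm S) ^ (3 ^ 2 : ℕ) = 1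
    exact h1
  have hmod := hpg.card_modEq_card_fixedPoints S
  have h1 : Nat.card S = S.ncard := Nat.card_coe_set_eq S
  have h2 : Nat.card (fixedPoints (Subgroup.zpowers e) S) = {v | v ∈ S ∧ f v = v}.ncard := by
    rw [← Nat.card_coe_set_eq]
    apply Nat.card_congr
    refine
      { toFun := fun x => ⟨x.1.1, x.1.2, ?_⟩
        invFun := fun v => ⟨⟨v.1, v.2.1⟩, ?_⟩
        left_inv := fun x => rfl
        right_inv := fun v => rfl }
    · have := x.2 ⟨e, Subgroup.mem_zpowers e⟩
      exact congrArg Subtype.val this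
    · intro g
      obtain ⟨g, n, hn⟩ := g
      subst hn
      show (e ^ n) (⟨v.1, v.2.1⟩ : S) = (⟨v.1, v.2.1⟩ : S)
      exact hzpow _ (Subtype.ext (by simp [he, v.2.2])) n
  rw [h1, h2] at hmod
  exact hmod

/-- The coordinate-permutation action on binary vectors. -/
def permAct {n : ℕ} (σ : Equiv.Perm (Fin n)) : Equiv.Perm (Fin n → ZMod 2) where
  toFun v := fun i => v (σ i)
  invFun v := fun i => v (σ⁻¹ i)
  left_inv v := funext fun i => by simp
  right_inv v := funext fun i => by simp

lemma permAct_apply {n : ℕ} (σ : Equiv.Perm (Fin n)) (v : Fin n → ZMod 2) :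
    permAct σ v = fun i => v (σ i) := rfl

lemma permAct_pow {n : ℕ} (σ : Equiv.Perm (Fin n)) :
    ∀ (m : ℕ) (v : Fin n → ZMod 2), (permAct σ ^ m) v = fun i => v ((σ ^ m) i) := by
  intro m
  induction m with
  | zero => intro v; rfl
  | succ k ih =>
    intro v
    rw [pow_succ, Equiv.Perm.mul_apply, ih (permAct σ v)]
    funext i
    rw [pow_succ']
    rfl

lemma wt_permAct {n : ℕ} (σ : Equiv.Perm (Fin n)) (v : Fin n → ZMod 2) :
    wt (permAct σ v) = wt v := by
  unfold wt
  apply Finset.card_bij' (fun i _ => σ i) (fun j _ => σ⁻¹ j)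
  · intro a ha
    simp only [Finset.mem_filter, Finset.mem_univ, true_and] at ha ⊢
    exact ha
  · intro a ha
    simp only [Finset.mem_filter, Finset.mem_univ, true_and] at ha ⊢
    simpa [permAct_apply] using ha
  · intro a _; simp
  · intro a _; simp

lemma wt_eq_zero {n : ℕ} (v : Fin n → ZMod 2) (h : ∀ i, v i = 0) : wt v = 0 := by
  unfold wt
  simp [h]

lemma ncard_sameCycle_permAct {n : ℕ} (σ : Equiv.Perm (Fin n)) (v : Fin n → ZMod 2)
    (i : Fin n) :
    {j | σ.SameCycle i j ∧ (permAct σ v) j ≠ 0}.ncard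
      = {j | σ.SameCycle i j ∧ v j ≠ 0}.ncard := by
  have hpre : {j | σ.SameCycle i j ∧ (permAct σ v) j ≠ 0}
      = (σ : Equiv.Perm (Fin n)) ⁻¹' {j | σ.SameCycle i j ∧ v j ≠ 0} := by
    ext j
    simp [permAct_apply, Set.mem_preimage, Equiv.Perm.sameCycle_apply_right]
  rw [hpre, ← Equiv.image_symm_eq_preimage,
    Set.ncard_image_of_injective _ (Equiv.injective _)]

/-- A σ-fixed vector satisfying the evenness condition on every cycle of a
permutation of cycle type `replicate 8 9` is zero. -/
lemma fixed_even_eq_zero {n : ℕ} (σ : Equiv.Perm (Fin n))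
    (htype : σ.cycleType = Multiset.replicate 8 9)
    (v : Fin n → ZMod 2) (hfix : permAct σ v = v)
    (heven : ∀ i : Fin n, Even (Set.ncard {j : Fin n | σ.SameCycle i j ∧ v j ≠ 0})) :
    ∀ i, v i = 0 := by
  have hf1 : ∀ j, v (σ j) = v j := fun j => congrFun hfix j
  have hpow : ∀ (m : ℕ) (j : Fin n), v ((σ ^ m) j) = v j := by
    intro m
    induction m with
    | zero => intro j; rfl
    | succ k ih =>
      intro j
      rw [pow_succ, Equiv.Perm.mul_apply, ih (σ j), hf1]
  intro i
  by_contra hvi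
  have hconst : ∀ j, σ.SameCycle i j → v j = v i := by
    intro j hsc
    obtain ⟨m, -, rfl⟩ := hsc.exists_pow_eq'
    exact hpow m i
  have hfull : {j | σ.SameCycle i j ∧ v j ≠ 0} = {j | σ.SameCycle i j} :=
    Set.ext fun j => ⟨fun h => h.1, fun h => ⟨h, by rw [hconst j h]; exact hvi⟩⟩
  have heveni := heven i
  by_cases hi : σ i = i
  · have hifix : ∀ m : ℕ, (σ ^ m) i = i := by
      intro m
      induction m with
      | zero => rfl
      | succ k ih => rw [pow_succ, Equiv.Perm.mul_apply, hi, ih]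
    have hsing : {j | σ.SameCycle i j} = {i} := by
      ext j
      simp only [Set.mem_setOf_eq, Set.mem_singleton_iff]
      constructor
      · intro h
        obtain ⟨m, -, rfl⟩ := h.exists_pow_eq'
        exact hifix m
      · rintro rfl
        exact ⟨0, by simp⟩
    rw [hfull, hsing, Set.ncard_singleton] at heveni
    norm_num at heveni
  · have hisupp : i ∈ σ.support := Equiv.Perm.mem_support.mpr hi
    have hset : {j | σ.SameCycle i j} = ↑(σ.cycleOf i).support := by
      ext j
      simp only [Set.mem_setOf_eq, Finset.coe_sort_coe, Finset.mem_coe,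
        Equiv.Perm.mem_support_cycleOf_iff]
      exact ⟨fun h => ⟨h, hisupp⟩, fun h => h.1⟩
    have hmem : (σ.cycleOf i).support.card ∈ σ.cycleType := by
      rw [Equiv.Perm.cycleType_def]
      exact Multiset.mem_map_of_mem _
        (Finset.mem_val.mpr (Equiv.Perm.cycleOf_mem_cycleFactorsFinset_iff.mpr hisupp))
    rw [htype] at hmem
    have h9 := Multiset.eq_of_mem_replicate hmem
    rw [hfull, hset, Set.ncard_coe_finset, h9] at heveni
    exact absurd heveni (by decide)

end AuxLemmas

/-- Let `C` be a binary self-dual `[76,38,14]` code with an automorphism `σ` of type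
`9-(8,0,4)`, and for `1 ≤ s ≤ 76` let `A_s`, `B_s`, `E_s` be the numbers of codewords
of weight `s` in `C`, `F_σ(C)`, `E_σ(C)` respectively.  Then `E_s ≡ 0 (mod 3)` and
`A_s ≡ B_s (mod 3)`. -/
theorem weight_counts_mod_three
    (C : Submodule (ZMod 2) (Fin 76 → ZMod 2))
    (hsd : IsSelfDual C) (hdim : Module.finrank (ZMod 2) C = 38)
    (hd : HasMinDist C 14)
    (σ : Equiv.Perm (Fin 76)) (hσ : IsAut σ C)
    (htype : σ.cycleType = Multiset.replicate 8 9) :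
    ∀ s : ℕ, 1 ≤ s → s ≤ 76 →
      3 ∣ Set.ncard {v : Fin 76 → ZMod 2 | v ∈ Esig σ C ∧ wt v = s} ∧
      Set.ncard {v : Fin 76 → ZMod 2 | v ∈ C ∧ wt v = s} ≡
        Set.ncard {v : Fin 76 → ZMod 2 | v ∈ Fsig σ C ∧ wt v = s} [MOD 3] := by
  intro s hs1 _
  have hσ9 : σ ^ 9 = 1 := by
    have hord : orderOf σ ∣ 9 := by
      rw [← Equiv.Perm.lcm_cycleType, htype]
      exact Multiset.lcm_dvd.mpr fun b hb => by rw [Multiset.eq_of_mem_replicate hb]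
    exact orderOf_dvd_iff_pow_eq_one.mp hord
  have hg9 : permAct σ ^ 9 = 1 := by
    apply Equiv.ext
    intro v
    rw [permAct_pow σ 9 v, hσ9]
    simp
  constructor
  · -- the Esig part
    set SE := {v : Fin 76 → ZMod 2 | v ∈ Esig σ C ∧ wt v = s} with hSE
    have hinvE : ∀ v, v ∈ SE ↔ permAct σ v ∈ SE := by
      intro v
      have h1 : v ∈ C ↔ (permAct σ v) ∈ C := hσ v
      have h3 : wt (permAct σ v) = wt v := wt_permAct σ v
      simp only [hSE, Set.mem_setOf_eq, Esig]
      constructor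
      · rintro ⟨⟨hc, he⟩, hw⟩
        refine ⟨⟨h1.mp hc, fun i => ?_⟩, by rw [h3, hw]⟩
        rw [ncard_sameCycle_permAct]
        exact he i
      · rintro ⟨⟨hc, he⟩, hw⟩
        refine ⟨⟨h1.mpr hc, fun i => ?_⟩, by rw [← h3, hw]⟩
        rw [← ncard_sameCycle_permAct σ v i]
        exact he i
    have hkey := key_count (permAct σ) hg9 SE hinvE
    have hempty : {v | v ∈ SE ∧ permAct σ v = v} = ∅ := by
      ext v
      simp only [hSE, Set.mem_setOf_eq, Set.mem_empty_iff_false, iff_false, not_and]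
      rintro ⟨⟨hvC, heven⟩, hw⟩ hfix
      have hz := fixed_even_eq_zero σ htype v hfix heven
      have : wt v = 0 := wt_eq_zero v hz
      omega
    rw [hempty, Set.ncard_empty] at hkey
    exact (Nat.modEq_zero_iff_dvd).mp hkey
  · -- the A ≡ B part
    set SA := {v : Fin 76 → ZMod 2 | v ∈ C ∧ wt v = s} with hSA
    have hinvA : ∀ v, v ∈ SA ↔ permAct σ v ∈ SA := by
      intro v
      have h1 : v ∈ C ↔ (permAct σ v) ∈ C := hσ v
      have h3 : wt (permAct σ v) = wt v := wt_permAct σ v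
      simp only [hSA, Set.mem_setOf_eq]
      rw [h3]
      tauto
    have hkey := key_count (permAct σ) hg9 SA hinvA
    have hFeq : {v | v ∈ SA ∧ permAct σ v = v}
        = {v : Fin 76 → ZMod 2 | v ∈ Fsig σ C ∧ wt v = s} := by
      ext v
      simp only [hSA, Set.mem_setOf_eq, Fsig, permAct_apply]
      tauto
    rw [hFeq] at hkey
    exact hkey
end

section
/- Let R = 𝔽₂[x]/(x⁹ − 1) and let 𝒯 ⊆ R be the set of classes of polynomials of degree < 9 with an even number of nonzero coefficients. Set e₁ = x⁸+x⁷+x⁵+x⁴+x²+x and e₂ = x⁶+x³. Then 𝒯 is an ideal of R and 𝒯 = I₁ ⊕ I₂ (an internal direct sum of ideals), where I₁ = {0, e₁, xe₁, x²e₁} is a field with 4 elements having multiplicative identity e₁, and I₂ = e₂R is a field with 64 elements having multiplicative identity e₂. -/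
open Polynomial in
/-- The ring `R = 𝔽₂[x]/(x⁹ − 1)`. -/
abbrev Rng : Type := Polynomial (ZMod 2) ⧸ Ideal.span {(X : Polynomial (ZMod 2)) ^ 9 - 1}

open Polynomial in
/-- The quotient map `𝔽₂[x] → R`. -/
noncomputable def pmk : Polynomial (ZMod 2) →+* Rng :=
  Ideal.Quotient.mk (Ideal.span {(X : Polynomial (ZMod 2)) ^ 9 - 1})

open Polynomial in
/-- `𝒯 ⊆ R`: classes of polynomials of degree `< 9` with an even number of nonzero
coefficients. -/
def Tset : Set Rng :=
  {r | ∃ p : Polynomial (ZMod 2), p.degree < 9 ∧ Even p.support.card ∧ pmk p = r}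

open Polynomial in
/-- `e₁ = x⁸+x⁷+x⁵+x⁴+x²+x`. -/
noncomputable def e1 : Rng := pmk (X ^ 8 + X ^ 7 + X ^ 5 + X ^ 4 + X ^ 2 + X)

open Polynomial in
/-- `e₂ = x⁶+x³`. -/
noncomputable def e2 : Rng := pmk (X ^ 6 + X ^ 3)

open Polynomial in
/-- The class of `x` in `R`. -/
noncomputable def xR : Rng := pmk X

/-- `I₁ = {0, e₁, xe₁, x²e₁}`. -/
noncomputable def I1set : Set Rng := {0, e1, xR * e1, xR ^ 2 * e1}

/-- `I₂ = e₂R`. -/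
def I2set : Set Rng := {r | ∃ s : Rng, r = e2 * s}


open Polynomial

section Aux

lemma two_poly : (2 : Polynomial (ZMod 2)) = 0 := by
  have h := map_ofNat (C : ZMod 2 →+* Polynomial (ZMod 2)) 2
  have h2 : (2 : ZMod 2) = 0 := rfl
  rw [h2] at h
  simpa using h.symm

lemma two_Rng : (2 : Rng) = 0 := by
  have := congrArg pmk two_poly
  rwa [map_ofNat, map_zero] at this

lemma pmkX : pmk X = xR := rfl

lemma x9 : xR ^ 9 = 1 := by
  have h : xR ^ 9 = pmk (X ^ 9) := by simp [xR]
  rw [h, show (1 : Rng) = pmk 1 from (map_one pmk).symm]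
  rw [pmk, Ideal.Quotient.mk_eq_mk_iff_sub_mem]
  exact Ideal.mem_span_singleton_self _

lemma e1_def : e1 = xR ^ 8 + xR ^ 7 + xR ^ 5 + xR ^ 4 + xR ^ 2 + xR := by
  simp [e1, xR, map_add, map_pow]

lemma e2_def : e2 = xR ^ 6 + xR ^ 3 := by
  simp [e2, xR, map_add, map_pow]

lemma i1 : e1 * e1 = e1 := by
  rw [e1_def]
  linear_combination (xR ^ 7 + 2 * xR ^ 6 + xR ^ 5 + 2 * xR ^ 4 + 4 * xR ^ 3 + 2 * xR ^ 2 + 3 * xR + 6) * x9 + (xR ^ 8 + xR ^ 7 + 3 * xR ^ 6 + xR ^ 5 + xR ^ 4 + 3 * xR ^ 3 + xR ^ 2 + xR + 3) * two_Rng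

lemma i2 : e2 * e2 = e2 := by
  rw [e2_def]
  linear_combination (xR ^ 3 + 2) * x9 + two_Rng

lemma i3 : e1 * e2 = 0 := by
  rw [e1_def, e2_def]
  linear_combination (xR ^ 5 + xR ^ 4 + 2 * xR ^ 2 + 2 * xR) * x9 + (xR ^ 8 + xR ^ 7 + xR ^ 5 + xR ^ 4 + xR ^ 2 + xR) * two_Rng

lemma i4 : xR ^ 3 * e1 = e1 := by
  rw [e1_def]
  linear_combination (xR ^ 2 + xR) * x9

lemma i5 : e1 + xR * e1 + xR ^ 2 * e1 = 0 := by
  rw [e1_def]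
  linear_combination (xR + 2) * x9 + (xR ^ 8 + xR ^ 7 + xR ^ 6 + xR ^ 5 + xR ^ 4 + xR ^ 3 + xR ^ 2 + xR + 1) * two_Rng

lemma gd : e2 * (xR ^ 6 + xR ^ 3 + 1) = 0 := by
  rw [e2_def]
  linear_combination (xR ^ 3 + 2) * x9 + (xR ^ 6 + xR ^ 3 + 1) * two_Rng

lemma fx : (1 + e1 + e2) * (xR - 1) = 0 := by
  rw [e1_def, e2_def]
  linear_combination x9

noncomputable def phi : Rng →+* ZMod 2 :=
  Ideal.Quotient.lift _ (evalRingHom (1 : ZMod 2)) (by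
    intro a ha
    rw [Ideal.mem_span_singleton] at ha
    obtain ⟨c, rfl⟩ := ha
    simp)

lemma phi_pmk (p : Polynomial (ZMod 2)) : phi (pmk p) = eval 1 p := rfl

lemma eval_one_eq_card (p : Polynomial (ZMod 2)) :
    eval 1 p = (p.support.card : ZMod 2) := by
  rw [eval_eq_sum, Polynomial.sum]
  have : ∀ n ∈ p.support, p.coeff n * 1 ^ n = 1 := by
    intro n hn
    have h1 : p.coeff n ≠ 0 := mem_support_iff.mp hn
    have : ∀ a : ZMod 2, a ≠ 0 → a = 1 := by decide
    simp [this _ h1]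
  rw [Finset.sum_congr rfl this]
  simp

lemma monic9 : (X ^ 9 - 1 : Polynomial (ZMod 2)).Monic := by
  have := monic_X_pow_sub_C (1 : ZMod 2) (by norm_num : 9 ≠ 0)
  simpa using this

lemma degree9 : (X ^ 9 - 1 : Polynomial (ZMod 2)).degree = 9 := by
  have := degree_X_pow_sub_C (by norm_num : 0 < 9) (1 : ZMod 2)
  simpa using this

lemma exists_rep (r : Rng) : ∃ p : Polynomial (ZMod 2), p.degree < 9 ∧ pmk p = r := by
  obtain ⟨q, rfl⟩ := Ideal.Quotient.mk_surjective r
  refine ⟨q %ₘ (X ^ 9 - 1), ?_, ?_⟩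
  · have := degree_modByMonic_lt q monic9
    rwa [degree9] at this
  · show pmk _ = pmk q
    rw [pmk, Ideal.Quotient.mk_eq_mk_iff_sub_mem]
    have h := modByMonic_add_div q (X ^ 9 - 1)
    rw [Ideal.mem_span_singleton]
    exact ⟨-(q /ₘ (X ^ 9 - 1)), by linear_combination h⟩

lemma Tset_eq_ker : Tset = (RingHom.ker phi : Ideal Rng) := by
  ext r
  constructor
  · rintro ⟨p, hdeg, heven, rfl⟩
    have : phi (pmk p) = 0 := by
      obtain ⟨k, hk⟩ := heven
      rw [phi_pmk, eval_one_eq_card, hk]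
      push_cast
      have h2 : (2 : ZMod 2) = 0 := rfl
      linear_combination (k : ZMod 2) * h2
    simpa [RingHom.mem_ker] using this
  · intro hr
    obtain ⟨p, hdeg, rfl⟩ := exists_rep r
    refine ⟨p, hdeg, ?_, rfl⟩
    have h0 : phi (pmk p) = 0 := by simpa [RingHom.mem_ker] using hr
    rw [phi_pmk, eval_one_eq_card] at h0
    have := (ZMod.natCast_eq_zero_iff _ 2).mp h0
    exact even_iff_two_dvd.mpr this

lemma mem_I1_iff {a : Rng} :
    a ∈ I1set ↔ a = 0 ∨ a = e1 ∨ a = xR * e1 ∨ a = xR ^ 2 * e1 := by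
  simp only [I1set, Set.mem_insert_iff, Set.mem_singleton_iff]

lemma zero_mem_I1 : (0 : Rng) ∈ I1set := mem_I1_iff.mpr (Or.inl rfl)
lemma e1_mem_I1 : e1 ∈ I1set := mem_I1_iff.mpr (Or.inr (Or.inl rfl))
lemma xe1_mem_I1 : xR * e1 ∈ I1set := mem_I1_iff.mpr (Or.inr (Or.inr (Or.inl rfl)))
lemma x2e1_mem_I1 : xR ^ 2 * e1 ∈ I1set := mem_I1_iff.mpr (Or.inr (Or.inr (Or.inr rfl)))

lemma xmul_I1 {a : Rng} (ha : a ∈ I1set) : xR * a ∈ I1set := by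
  rcases mem_I1_iff.mp ha with rfl | rfl | rfl | rfl
  · simpa using zero_mem_I1
  · exact xe1_mem_I1
  · exact mem_I1_iff.mpr (Or.inr (Or.inr (Or.inr (by ring))))
  · exact mem_I1_iff.mpr (Or.inr (Or.inl (by linear_combination i4)))

lemma add_I1 {a b : Rng} (ha : a ∈ I1set) (hb : b ∈ I1set) : a + b ∈ I1set := by
  rcases mem_I1_iff.mp ha with rfl | rfl | rfl | rfl <;>
    rcases mem_I1_iff.mp hb with rfl | rfl | rfl | rfl <;>
      rw [mem_I1_iff]
  · exact Or.inl (by ring)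
  · exact Or.inr (Or.inl (by ring))
  · exact Or.inr (Or.inr (Or.inl (by ring)))
  · exact Or.inr (Or.inr (Or.inr (by ring)))
  · exact Or.inr (Or.inl (by ring))
  · exact Or.inl (by linear_combination e1 * two_Rng)
  · exact Or.inr (Or.inr (Or.inr (by linear_combination i5 - xR ^ 2 * e1 * two_Rng)))
  · exact Or.inr (Or.inr (Or.inl (by linear_combination i5 - xR * e1 * two_Rng)))
  · exact Or.inr (Or.inr (Or.inl (by ring)))
  · exact Or.inr (Or.inr (Or.inr (by linear_combination i5 - xR ^ 2 * e1 * two_Rng)))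
  · exact Or.inl (by linear_combination xR * e1 * two_Rng)
  · exact Or.inr (Or.inl (by linear_combination i5 - e1 * two_Rng))
  · exact Or.inr (Or.inr (Or.inr (by ring)))
  · exact Or.inr (Or.inr (Or.inl (by linear_combination i5 - xR * e1 * two_Rng)))
  · exact Or.inr (Or.inl (by linear_combination i5 - e1 * two_Rng))
  · exact Or.inl (by linear_combination xR ^ 2 * e1 * two_Rng)

lemma mul_e1_mem (s : Rng) : s * e1 ∈ I1set := by
  obtain ⟨p, rfl⟩ := Ideal.Quotient.mk_surjective s
  show pmk p * e1 ∈ I1set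
  induction p using Polynomial.induction_on with
  | C a =>
    have h01 : ∀ b : ZMod 2, b = 0 ∨ b = 1 := by decide
    rcases h01 a with rfl | rfl
    · simpa using zero_mem_I1
    · simpa using e1_mem_I1
  | add p q hp hq => rw [map_add, add_mul]; exact add_I1 hp hq
  | monomial n a h =>
    have : pmk (C a * X ^ (n + 1)) * e1 = xR * (pmk (C a * X ^ n) * e1) := by
      simp only [map_mul, map_pow, pow_succ, xR]
      ring
    rw [this]
    exact xmul_I1 h

lemma pmk_ne_zero {p : Polynomial (ZMod 2)} (hdeg : p.degree < 9) (hp : p ≠ 0) :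
    pmk p ≠ 0 := by
  intro h
  have hmem : p ∈ Ideal.span {(X : Polynomial (ZMod 2)) ^ 9 - 1} := by
    rwa [pmk, Ideal.Quotient.eq_zero_iff_mem] at h
  rw [Ideal.mem_span_singleton] at hmem
  have := Polynomial.degree_le_of_dvd hmem hp
  rw [degree9] at this
  exact absurd (lt_of_le_of_lt this hdeg) (lt_irrefl _)

lemma e1_rep : e1 = pmk (X ^ 8 + X ^ 7 + X ^ 5 + X ^ 4 + X ^ 2 + X) := rfl

lemma xe1_rep : xR * e1 = pmk (X ^ 8 + X ^ 6 + X ^ 5 + X ^ 3 + X ^ 2 + 1) := by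
  simp only [map_add, map_pow, map_one, pmkX]
  rw [e1_def]
  linear_combination x9

lemma x2e1_rep : xR ^ 2 * e1 = pmk (X ^ 7 + X ^ 6 + X ^ 4 + X ^ 3 + X + 1) := by
  simp only [map_add, map_pow, map_one, pmkX]
  rw [e1_def]
  linear_combination (xR + 1) * x9

lemma degE1 : (X ^ 8 + X ^ 7 + X ^ 5 + X ^ 4 + X ^ 2 + X : Polynomial (ZMod 2)).degree < 9 := by
  have h8 : (X ^ 8 + X ^ 7 + X ^ 5 + X ^ 4 + X ^ 2 + X : Polynomial (ZMod 2)).degree ≤ 8 := by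
    compute_degree
  exact lt_of_le_of_lt h8 (by norm_num)

lemma degD1 : (X ^ 8 + X ^ 6 + X ^ 5 + X ^ 3 + X ^ 2 + 1 : Polynomial (ZMod 2)).degree < 9 := by
  have h8 : (X ^ 8 + X ^ 6 + X ^ 5 + X ^ 3 + X ^ 2 + 1 : Polynomial (ZMod 2)).degree ≤ 8 := by
    compute_degree
  exact lt_of_le_of_lt h8 (by norm_num)

lemma degD2 : (X ^ 7 + X ^ 6 + X ^ 4 + X ^ 3 + X + 1 : Polynomial (ZMod 2)).degree < 9 := by
  have h8 : (X ^ 7 + X ^ 6 + X ^ 4 + X ^ 3 + X + 1 : Polynomial (ZMod 2)).degree ≤ 7 := by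
    compute_degree
  exact lt_of_le_of_lt h8 (by norm_num)

lemma e1_ne_zero : e1 ≠ 0 := by
  rw [e1_rep]
  apply pmk_ne_zero degE1
  intro h
  simpa using congrArg (fun r => r.coeff 1) h

lemma pmk_ne {p q : Polynomial (ZMod 2)} (hp : p.degree < 9) (hq : q.degree < 9)
    (h : p ≠ q) : pmk p ≠ pmk q := by
  intro he
  apply h
  by_contra hne
  have hsub : p - q ≠ 0 := sub_ne_zero.mpr hne
  have hdeg : (p - q).degree < 9 := lt_of_le_of_lt (degree_sub_le p q) (max_lt hp hq)
  exact pmk_ne_zero hdeg hsub (by rw [map_sub, he, sub_self])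

lemma xe1_ne_zero : xR * e1 ≠ 0 := by
  rw [xe1_rep]
  apply pmk_ne_zero degD1
  intro h
  simpa using congrArg (fun r => r.coeff 0) h

lemma x2e1_ne_zero : xR ^ 2 * e1 ≠ 0 := by
  rw [x2e1_rep]
  apply pmk_ne_zero degD2
  intro h
  simpa using congrArg (fun r => r.coeff 0) h

lemma e1_ne_xe1 : e1 ≠ xR * e1 := by
  rw [xe1_rep, e1_rep]
  apply pmk_ne degE1 degD1
  intro h
  simpa using congrArg (fun r => r.coeff 0) h

lemma e1_ne_x2e1 : e1 ≠ xR ^ 2 * e1 := by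
  rw [x2e1_rep, e1_rep]
  apply pmk_ne degE1 degD2
  intro h
  simpa using congrArg (fun r => r.coeff 0) h

lemma xe1_ne_x2e1 : xR * e1 ≠ xR ^ 2 * e1 := by
  rw [x2e1_rep, xe1_rep]
  apply pmk_ne degD1 degD2
  intro h
  simpa [Polynomial.coeff_X] using congrArg (fun r => r.coeff 8) h

lemma I1_ncard : Set.ncard I1set = 4 := by
  rw [I1set]
  rw [Set.ncard_insert_of_notMem (by
        simp only [Set.mem_insert_iff, Set.mem_singleton_iff]
        push_neg
        exact ⟨(Ne.symm e1_ne_zero), Ne.symm xe1_ne_zero, Ne.symm x2e1_ne_zero⟩)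
      (Set.Finite.insert _ (Set.Finite.insert _ (Set.finite_singleton _)))]
  rw [Set.ncard_insert_of_notMem (by
        simp only [Set.mem_insert_iff, Set.mem_singleton_iff]
        push_neg
        exact ⟨e1_ne_xe1, e1_ne_x2e1⟩)
      (Set.Finite.insert _ (Set.finite_singleton _))]
  rw [Set.ncard_pair xe1_ne_x2e1]

lemma I1_span : ((Ideal.span {e1} : Ideal Rng) : Set Rng) = I1set := by
  ext r
  constructor
  · intro hr
    obtain ⟨a, rfl⟩ := Ideal.mem_span_singleton'.mp hr
    exact mul_e1_mem a
  · intro hr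
    rcases mem_I1_iff.mp hr with rfl | rfl | rfl | rfl
    · exact Ideal.zero_mem _
    · exact Ideal.mem_span_singleton_self _
    · exact Ideal.mem_span_singleton'.mpr ⟨xR, rfl⟩
    · exact Ideal.mem_span_singleton'.mpr ⟨xR ^ 2, rfl⟩

lemma I1_mul {a b : Rng} (ha : a ∈ I1set) (hb : b ∈ I1set) : a * b ∈ I1set := by
  rcases mem_I1_iff.mp hb with rfl | rfl | rfl | rfl
  · rw [mul_zero]; exact zero_mem_I1
  · exact mul_e1_mem a
  · rw [show a * (xR * e1) = (a * xR) * e1 by ring]; exact mul_e1_mem _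
  · rw [show a * (xR ^ 2 * e1) = (a * xR ^ 2) * e1 by ring]; exact mul_e1_mem _

lemma I1_id {a : Rng} (ha : a ∈ I1set) : a * e1 = a := by
  rcases mem_I1_iff.mp ha with rfl | rfl | rfl | rfl
  · ring
  · exact i1
  · linear_combination xR * i1
  · linear_combination xR ^ 2 * i1

lemma I1_inv {a : Rng} (ha : a ∈ I1set) (h0 : a ≠ 0) : ∃ b ∈ I1set, a * b = e1 := by
  rcases mem_I1_iff.mp ha with rfl | rfl | rfl | rfl
  · exact absurd rfl h0
  · exact ⟨e1, e1_mem_I1, i1⟩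
  · exact ⟨xR ^ 2 * e1, x2e1_mem_I1, by linear_combination xR ^ 3 * i1 + i4⟩
  · exact ⟨xR * e1, xe1_mem_I1, by linear_combination xR ^ 3 * i1 + i4⟩

noncomputable def gp : Polynomial (ZMod 2) := X ^ 6 + X ^ 3 + 1

lemma gp_monic : gp.Monic := by
  have h : degree (X ^ 3 + 1 : Polynomial (ZMod 2)) ≤ 3 := by
    compute_degree
  have hlt : degree (X ^ 3 + 1 : Polynomial (ZMod 2)) < (6 : ℕ) :=
    lt_of_le_of_lt h (by norm_num)
  have := monic_X_pow_add (n := 6) (p := (X ^ 3 + 1 : Polynomial (ZMod 2))) hlt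
  simpa [gp, add_assoc] using this

lemma gp_ne_zero : gp ≠ 0 := gp_monic.ne_zero

lemma gp_natDegree : gp.natDegree = 6 := by unfold gp; compute_degree!

lemma monic_of_ne_zero' {p : Polynomial (ZMod 2)} (hp : p ≠ 0) : p.Monic := by
  have h := leadingCoeff_ne_zero.mpr hp
  have h01 : ∀ a : ZMod 2, a ≠ 0 → a = 1 := by decide
  exact h01 _ h

lemma dvd_pow_card {q : Polynomial (ZMod 2)} (hmon : q.Monic) (hirr : Irreducible q) :
    q ∣ X ^ 2 ^ q.natDegree - X := by
  haveI : Fact (Irreducible q) := ⟨hirr⟩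
  have hq : q ≠ 0 := hmon.ne_zero
  let pb := AdjoinRoot.powerBasis hq
  let e : AdjoinRoot q ≃ (Fin pb.dim → ZMod 2) := pb.basis.equivFun.toEquiv
  haveI : Fintype (AdjoinRoot q) := Fintype.ofEquiv _ e.symm
  have hcard : Fintype.card (AdjoinRoot q) = 2 ^ q.natDegree := by
    rw [Fintype.card_congr e, Fintype.card_fun]
    have hd : pb.dim = q.natDegree := rfl
    simp [hd]
  have hα : (AdjoinRoot.root q) ^ 2 ^ q.natDegree = AdjoinRoot.root q := by
    rw [← hcard]
    exact FiniteField.pow_card _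
  have hmin : minpoly (ZMod 2) (AdjoinRoot.root q) = q := by
    rw [AdjoinRoot.minpoly_root hq, hmon.leadingCoeff, inv_one, map_one, mul_one]
  have hdvd := minpoly.dvd (ZMod 2) (AdjoinRoot.root q)
    (p := X ^ 2 ^ q.natDegree - X) (by
      rw [map_sub, aeval_X_pow, aeval_X, hα, sub_self])
  rwa [hmin] at hdvd

lemma cop1 : IsCoprime gp (X ^ 4 - X : Polynomial (ZMod 2)) :=
  ⟨1, X ^ 2, by unfold gp; linear_combination (X : Polynomial (ZMod 2)) ^ 6 * two_poly⟩

lemma cop2 : IsCoprime gp (X ^ 8 - X : Polynomial (ZMod 2)) :=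
  ⟨X ^ 6 + X ^ 4 + X ^ 2 + X + 1, X ^ 4 + X ^ 2 + X + 1, by
    unfold gp
    linear_combination (X ^ 12 + X ^ 10 + X ^ 9 + X ^ 8 + X ^ 7 + X ^ 6 + X ^ 4 :
      Polynomial (ZMod 2)) * two_poly⟩

lemma one_le_natDegree' {p : Polynomial (ZMod 2)} (hp : p ≠ 0) (hu : ¬IsUnit p) :
    1 ≤ p.natDegree := by
  by_contra h
  push_neg at h
  have h0 : p.natDegree = 0 := by omega
  exact hu (isUnit_iff_degree_eq_zero.mpr (by rw [degree_eq_natDegree hp, h0]; rfl))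

lemma q_contradiction {q : Polynomial (ZMod 2)} (hirr : Irreducible q)
    (hdvdg : q ∣ gp) (hd : q.natDegree ≤ 3) : False := by
  have hq0 : q ≠ 0 := hirr.ne_zero
  have hmon : q.Monic := monic_of_ne_zero' hq0
  have hd1 : 1 ≤ q.natDegree := one_le_natDegree' hq0 hirr.not_isUnit
  have hpow := dvd_pow_card hmon hirr
  have hcases : q ∣ (X ^ 4 - X : Polynomial (ZMod 2)) ∨ q ∣ (X ^ 8 - X : Polynomial (ZMod 2)) := by
    have h123 : q.natDegree = 1 ∨ q.natDegree = 2 ∨ q.natDegree = 3 := by omega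
    rcases h123 with h | h | h
    · rw [h] at hpow
      norm_num at hpow
      left
      exact hpow.trans ⟨X ^ 2 + X + 1, by ring⟩
    · rw [h] at hpow
      norm_num at hpow
      left
      exact hpow
    · rw [h] at hpow
      norm_num at hpow
      right
      exact hpow
  rcases hcases with h | h
  · exact hirr.not_isUnit (cop1.isUnit_of_dvd' hdvdg h)
  · exact hirr.not_isUnit (cop2.isUnit_of_dvd' hdvdg h)

lemma gp_irred : Irreducible gp := by
  rw [irreducible_iff]
  constructor
  · intro hu
    have h := isUnit_iff_degree_eq_zero.mp hu
    rw [degree_eq_natDegree gp_ne_zero, gp_natDegree] at h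
    exact absurd h (by decide)
  · intro a b hab
    by_contra hcon
    push_neg at hcon
    obtain ⟨hua, hub⟩ := hcon
    have ha0 : a ≠ 0 := by rintro rfl; exact gp_ne_zero (by simp [hab])
    have hb0 : b ≠ 0 := by rintro rfl; exact gp_ne_zero (by simp [hab])
    have hsum : a.natDegree + b.natDegree = 6 := by
      rw [← gp_natDegree, hab, natDegree_mul ha0 hb0]
    rcases le_or_gt a.natDegree 3 with h | h
    · obtain ⟨q, hqirr, hqdvd⟩ := WfDvdMonoid.exists_irreducible_factor hua ha0
      exact q_contradiction hqirr (hqdvd.trans ⟨b, hab⟩)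
        ((natDegree_le_of_dvd hqdvd ha0).trans h)
    · have hb3 : b.natDegree ≤ 3 := by omega
      obtain ⟨q, hqirr, hqdvd⟩ := WfDvdMonoid.exists_irreducible_factor hub hb0
      exact q_contradiction hqirr (hqdvd.trans ⟨a, by rw [hab]; ring⟩)
        ((natDegree_le_of_dvd hqdvd hb0).trans hb3)

lemma gp_dvd : gp ∣ (X : Polynomial (ZMod 2)) ^ 9 - 1 :=
  ⟨X ^ 3 - 1, by unfold gp; ring⟩

noncomputable def piK : Rng →+* AdjoinRoot gp :=
  Ideal.Quotient.lift _ (AdjoinRoot.mk gp) (by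
    intro a ha
    rw [Ideal.mem_span_singleton] at ha
    obtain ⟨c, rfl⟩ := ha
    rw [AdjoinRoot.mk_eq_zero]
    exact gp_dvd.mul_right c)

lemma piK_pmk (p : Polynomial (ZMod 2)) : piK (pmk p) = AdjoinRoot.mk gp p := rfl

lemma twoK : (2 : AdjoinRoot gp) = 0 := by
  have h := map_ofNat (AdjoinRoot.mk gp) 2
  rw [two_poly] at h
  simpa using h.symm

lemma piK_e2 : piK e2 = 1 := by
  show AdjoinRoot.mk gp (X ^ 6 + X ^ 3) = 1
  have h : (X ^ 6 + X ^ 3 : Polynomial (ZMod 2)) = gp - 1 := by unfold gp; ring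
  rw [h, map_sub, AdjoinRoot.mk_self, map_one]
  linear_combination -twoK

lemma e2_mul_I2 {a : Rng} (ha : a ∈ I2set) : e2 * a = a := by
  obtain ⟨s, rfl⟩ := ha
  linear_combination s * i2

lemma I2_zero : (0 : Rng) ∈ I2set := ⟨0, by ring⟩
lemma I2_e2 : e2 ∈ I2set := ⟨1, by ring⟩

lemma I2_sub {a b : Rng} (ha : a ∈ I2set) (hb : b ∈ I2set) : a - b ∈ I2set := by
  obtain ⟨s, rfl⟩ := ha
  obtain ⟨t, rfl⟩ := hb
  exact ⟨s - t, by ring⟩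

lemma piK_inj_I2 {a : Rng} (ha : a ∈ I2set) (h0 : piK a = 0) : a = 0 := by
  obtain ⟨p, hp⟩ : ∃ p, pmk p = a := Ideal.Quotient.mk_surjective a
  have hmk : AdjoinRoot.mk gp p = 0 := by rw [← piK_pmk, hp, h0]
  rw [AdjoinRoot.mk_eq_zero] at hmk
  obtain ⟨w, rfl⟩ := hmk
  have hgp : pmk (gp * w) = pmk gp * pmk w := map_mul _ _ _
  have hgpe : e2 * pmk gp = 0 := by
    have hx : pmk gp = xR ^ 6 + xR ^ 3 + 1 := by
      unfold gp
      simp only [map_add, map_pow, map_one, pmkX]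
    rw [hx]
    exact gd
  calc a = e2 * a := (e2_mul_I2 ha).symm
    _ = e2 * (pmk gp * pmk w) := by rw [← hp, hgp]
    _ = (e2 * pmk gp) * pmk w := by ring
    _ = 0 := by rw [hgpe, zero_mul]

lemma piK_surj_I2 (k : AdjoinRoot gp) : ∃ a ∈ I2set, piK a = k := by
  obtain ⟨q, rfl⟩ := AdjoinRoot.mk_surjective k
  refine ⟨e2 * pmk q, ⟨pmk q, rfl⟩, ?_⟩
  rw [map_mul, piK_e2, one_mul, piK_pmk]

lemma I2_card : Set.ncard I2set = 64 := by
  haveI : Fact (Irreducible gp) := ⟨gp_irred⟩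
  have hinj : Function.Injective (fun a : I2set => piK a.val) := by
    intro a b hab
    have hz : piK (a.val - b.val) = 0 := by
      rw [map_sub, sub_eq_zero]
      exact hab
    have hmem : a.val - b.val ∈ I2set := I2_sub a.property b.property
    have := piK_inj_I2 hmem hz
    exact Subtype.ext (sub_eq_zero.mp this)
  have hsurj : Function.Surjective (fun a : I2set => piK a.val) := by
    intro k
    obtain ⟨a, ha, hk⟩ := piK_surj_I2 k
    exact ⟨⟨a, ha⟩, hk⟩
  have e : I2set ≃ AdjoinRoot gp := Equiv.ofBijective _ ⟨hinj, hsurj⟩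
  rw [← Nat.card_coe_set_eq, Nat.card_congr e]
  rw [Nat.card_congr (AdjoinRoot.powerBasis gp_ne_zero).basis.equivFun.toEquiv]
  rw [Nat.card_fun]
  simp [Nat.card_eq_fintype_card, gp_natDegree]

lemma e2_rep : e2 = pmk (X ^ 6 + X ^ 3) := rfl

lemma degE2 : (X ^ 6 + X ^ 3 : Polynomial (ZMod 2)).degree < 9 := by
  have h8 : (X ^ 6 + X ^ 3 : Polynomial (ZMod 2)).degree ≤ 6 := by
    compute_degree
  exact lt_of_le_of_lt h8 (by norm_num)

lemma e2_ne_zero : e2 ≠ 0 := by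
  rw [e2_rep]
  apply pmk_ne_zero degE2
  intro h
  simpa using congrArg (fun r => r.coeff 3) h

lemma I2_span : ((Ideal.span {e2} : Ideal Rng) : Set Rng) = I2set := by
  ext r
  rw [SetLike.mem_coe, Ideal.mem_span_singleton']
  constructor
  · rintro ⟨a, rfl⟩
    exact ⟨a, by ring⟩
  · rintro ⟨s, rfl⟩
    exact ⟨s, by ring⟩

lemma I2_mul {a b : Rng} (ha : a ∈ I2set) (hb : b ∈ I2set) : a * b ∈ I2set := by
  obtain ⟨s, rfl⟩ := ha
  obtain ⟨t, rfl⟩ := hb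
  exact ⟨s * (e2 * t), by ring⟩

lemma I2_id {a : Rng} (ha : a ∈ I2set) : a * e2 = a := by
  rw [mul_comm]
  exact e2_mul_I2 ha

lemma I2_inv {a : Rng} (ha : a ∈ I2set) (h0 : a ≠ 0) : ∃ b ∈ I2set, a * b = e2 := by
  haveI : Fact (Irreducible gp) := ⟨gp_irred⟩
  have hk : piK a ≠ 0 := fun h => h0 (piK_inj_I2 ha h)
  obtain ⟨r, hr⟩ : ∃ r : Rng, piK r = (piK a)⁻¹ := by
    obtain ⟨q, hq⟩ := AdjoinRoot.mk_surjective (piK a)⁻¹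
    exact ⟨pmk q, hq⟩
  refine ⟨e2 * r, ⟨r, rfl⟩, ?_⟩
  have hmem : a * (e2 * r) - e2 ∈ I2set := I2_sub (I2_mul ha ⟨r, rfl⟩) I2_e2
  have hz : piK (a * (e2 * r) - e2) = 0 := by
    rw [map_sub, map_mul, map_mul, piK_e2, hr, one_mul, mul_inv_cancel₀ hk, sub_self]
  have := piK_inj_I2 hmem hz
  exact sub_eq_zero.mp this

lemma phi_e1 : phi e1 = 0 := by
  show eval 1 (X ^ 8 + X ^ 7 + X ^ 5 + X ^ 4 + X ^ 2 + X : Polynomial (ZMod 2)) = 0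
  simp
  decide

lemma phi_e2 : phi e2 = 0 := by
  show eval 1 (X ^ 6 + X ^ 3 : Polynomial (ZMod 2)) = 0
  simp
  decide

lemma phi_I1 {a : Rng} (ha : a ∈ I1set) : phi a = 0 := by
  rcases mem_I1_iff.mp ha with rfl | rfl | rfl | rfl
  · exact map_zero _
  · exact phi_e1
  · rw [map_mul, phi_e1, mul_zero]
  · rw [map_mul, phi_e1, mul_zero]

lemma phi_I2 {a : Rng} (ha : a ∈ I2set) : phi a = 0 := by
  obtain ⟨s, rfl⟩ := ha
  rw [map_mul, phi_e2, zero_mul]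

lemma sum_mem_Tset {a b : Rng} (ha : a ∈ I1set) (hb : b ∈ I2set) : a + b ∈ Tset := by
  have hmem : a + b ∈ (RingHom.ker phi : Ideal Rng) := by
    rw [RingHom.mem_ker, map_add, phi_I1 ha, phi_I2 hb, add_zero]
  rw [Tset_eq_ker]
  exact hmem

lemma f_mul_zero {t : Rng} (ht : phi t = 0) : (1 + e1 + e2) * t = 0 := by
  obtain ⟨p, rfl⟩ : ∃ p, pmk p = t := Ideal.Quotient.mk_surjective t
  rw [phi_pmk] at ht
  have hroot : IsRoot p 1 := ht
  obtain ⟨q, rfl⟩ := (dvd_iff_isRoot).mpr hroot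
  have hx : pmk (X - C 1) = xR - 1 := by
    rw [map_sub, pmkX]
    simp
  rw [map_mul, hx,
    show (1 + e1 + e2) * ((xR - 1) * pmk q) = ((1 + e1 + e2) * (xR - 1)) * pmk q by ring,
    fx, zero_mul]

lemma decomp {t : Rng} (ht : phi t = 0) : t = e1 * t + e2 * t := by
  have hf := f_mul_zero ht
  linear_combination -hf + t * two_Rng

lemma e1_mul_I1 {a : Rng} (ha : a ∈ I1set) : e1 * a = a := by
  rw [mul_comm]
  exact I1_id ha

lemma e1_mul_I2 {b : Rng} (hb : b ∈ I2set) : e1 * b = 0 := by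
  obtain ⟨s, rfl⟩ := hb
  calc e1 * (e2 * s) = (e1 * e2) * s := by ring
    _ = 0 := by rw [i3, zero_mul]

lemma e2_mul_I1 {a : Rng} (ha : a ∈ I1set) : e2 * a = 0 := by
  rcases mem_I1_iff.mp ha with rfl | rfl | rfl | rfl
  · exact mul_zero _
  · rw [mul_comm]; exact i3
  · calc e2 * (xR * e1) = xR * (e1 * e2) := by ring
      _ = 0 := by rw [i3, mul_zero]
  · calc e2 * (xR ^ 2 * e1) = xR ^ 2 * (e1 * e2) := by ring
      _ = 0 := by rw [i3, mul_zero]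

end Aux

/-- `𝒯` is an ideal of `R = 𝔽₂[x]/(x⁹−1)` and `𝒯 = I₁ ⊕ I₂` is the internal direct sum
of the ideals `I₁ = {0, e₁, xe₁, x²e₁}`, a field with 4 elements with multiplicative
identity `e₁`, and `I₂ = e₂R`, a field with 64 elements with multiplicative identity
`e₂`. -/
theorem T_eq_I1_oplus_I2 :
    -- 𝒯 is an ideal of R
    (∃ I : Ideal Rng, (I : Set Rng) = Tset) ∧
    -- I₁ is an ideal of R which is a field with 4 elements and identity e₁
    (∃ J : Ideal Rng, (J : Set Rng) = I1set) ∧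
    Set.ncard I1set = 4 ∧ e1 ≠ 0 ∧
    (∀ a ∈ I1set, ∀ b ∈ I1set, a * b ∈ I1set) ∧
    (∀ a ∈ I1set, a * e1 = a) ∧
    (∀ a ∈ I1set, a ≠ 0 → ∃ b ∈ I1set, a * b = e1) ∧
    -- I₂ is an ideal of R which is a field with 64 elements and identity e₂
    (∃ J : Ideal Rng, (J : Set Rng) = I2set) ∧
    Set.ncard I2set = 64 ∧ e2 ≠ 0 ∧
    (∀ a ∈ I2set, ∀ b ∈ I2set, a * b ∈ I2set) ∧
    (∀ a ∈ I2set, a * e2 = a) ∧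
    (∀ a ∈ I2set, a ≠ 0 → ∃ b ∈ I2set, a * b = e2) ∧
    -- 𝒯 = I₁ ⊕ I₂ : internal direct sum
    (∀ a ∈ I1set, ∀ b ∈ I2set, a + b ∈ Tset) ∧
    (∀ t ∈ Tset, ∃! p : Rng × Rng, p.1 ∈ I1set ∧ p.2 ∈ I2set ∧ t = p.1 + p.2) := by
  haveI : Fact (Irreducible gp) := ⟨gp_irred⟩
  refine ⟨⟨(RingHom.ker phi : Ideal Rng), Tset_eq_ker.symm⟩,
    ⟨Ideal.span {e1}, I1_span⟩, I1_ncard, e1_ne_zero,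
    fun a ha b hb => I1_mul ha hb,
    fun a ha => I1_id ha,
    fun a ha h0 => I1_inv ha h0,
    ⟨Ideal.span {e2}, I2_span⟩, I2_card, e2_ne_zero,
    fun a ha b hb => I2_mul ha hb,
    fun a ha => I2_id ha,
    fun a ha h0 => I2_inv ha h0,
    fun a ha b hb => sum_mem_Tset ha hb,
    ?_⟩
  intro t ht
  have hker : phi t = 0 := by
    rw [Tset_eq_ker] at ht
    simpa [RingHom.mem_ker] using ht
  refine ⟨(e1 * t, e2 * t),
    ⟨by rw [mul_comm]; exact mul_e1_mem t, ⟨t, rfl⟩, decomp hker⟩, ?_⟩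
  rintro ⟨a, b⟩ ⟨ha, hb, hab⟩
  have h1 : e1 * t = a := by
    rw [hab, mul_add, e1_mul_I1 ha, e1_mul_I2 hb, add_zero]
  have h2 : e2 * t = b := by
    rw [hab, mul_add, e2_mul_I1 ha, e2_mul_I2 hb, zero_add]
  exact Prod.ext h1.symm h2.symm
end
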